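/- Let A be a finite-dimensional gentle algebra over an algebraically closed field k and let e be an idempotent of A. Then the factor algebra A/⟨e⟩ of A by the two-sided ideal generated by e is also a gentle algebra. -/

import Mathlib

/-!
Common definitions for formalizing "On support τ-tilting graphs of gentle algebras"
(Fu–Geng–Liu–Zhou).

We work with the category `ModuleCat B` of (left) `B`-modules over a ring `B`
(for a finite-dimensional algebra, left and right modules play symmetric roles).
Finitely generated modules are singled out by `Module.Finite`.

τ-rigidity is formalized through the Auslander–Smalø characterization:
for finitely generated modules over a finite-dimensional algebra,
`Hom_A(M, τN) = 0` if and only if `Ext¹_A(N, Fac M) = 0`; in particular `M` is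
τ-rigid (i.e. `Hom_A(M, τM) = 0`, with `τ` the Auslander–Reiten translation)
iff every short exact sequence `0 → X → E → M → 0` with `X ∈ Fac M` splits.
This avoids a (currently unavailable) construction of the AR translation while
being provably equivalent to the paper's definition.
-/

open CategoryTheory CategoryTheory.Limits

namespace STT

variable (B : Type) [Ring B]

/-- `N` is (isomorphic to) a direct summand of `M`. -/
def IsSummand (N M : ModuleCat.{0} B) : Prop :=
  ∃ (i : N ⟶ M) (r : M ⟶ N), i ≫ r = 𝟙 N

/-- `M` is an indecomposable object of `mod B`: finitely generated, nonzero, and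
every direct summand is zero or the whole of `M`. -/
def Indecomp (M : ModuleCat.{0} B) : Prop :=
  Module.Finite B M ∧ ¬ IsZero M ∧
    ∀ N : ModuleCat.{0} B, IsSummand B N M → IsZero N ∨ Nonempty (N ≅ M)

/-- The setoid identifying isomorphic modules. -/
def isoSetoid : Setoid (ModuleCat.{0} B) where
  r M N := Nonempty (M ≅ N)
  iseqv := ⟨fun M => ⟨Iso.refl M⟩, fun h => h.elim fun e => ⟨e.symm⟩,
    fun h h' => h.elim fun e => h'.elim fun f => ⟨e ≪≫ f⟩⟩

/-- `|M|`: the number of pairwise non-isomorphic indecomposable direct summands of `M`. -/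
noncomputable def numIndec (M : ModuleCat.{0} B) : ℕ :=
  Nat.card (Quotient (Setoid.comap
    (fun N : {N : ModuleCat.{0} B // Indecomp B N ∧ IsSummand B N M} => N.val) (isoSetoid B)))

/-- `|B|`: the number of pairwise non-isomorphic indecomposable direct summands of the
regular module, i.e. the number of simple `B`-modules for `B` basic. -/
noncomputable def algRank : ℕ := numIndec B (ModuleCat.of B B)

/-- `X ∈ Fac M`: `X` is a factor module of a (finite) direct sum of copies of `M`. -/
def InFac (M X : ModuleCat.{0} B) : Prop :=
  ∃ (n : ℕ) (f : (⨁ fun _ : Fin n => M) ⟶ X), Epi f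

/-- `M` is τ-rigid, via the Auslander–Smalø characterization:
`Hom_B(M, τM) = 0` iff every short exact sequence `0 → X → E → M → 0` with
`X ∈ Fac M` splits (i.e. `Ext¹_B(M, Fac M) = 0`). -/
def IsTauRigid (M : ModuleCat.{0} B) : Prop :=
  ∀ (X E : ModuleCat.{0} B) (i : X ⟶ E) (p : E ⟶ M) (w : i ≫ p = 0),
    (ShortComplex.mk i p w).ShortExact → InFac B M X → ∃ s : M ⟶ E, s ≫ p = 𝟙 M

/-- `(M, P)` is a τ-rigid pair: `M` is a finitely generated τ-rigid module and `P` is a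
finitely generated projective module with `Hom_B(P, M) = 0`. -/
def IsTauRigidPair (M P : ModuleCat.{0} B) : Prop :=
  Module.Finite B M ∧ Module.Finite B P ∧ IsTauRigid B M ∧
    Projective P ∧ ∀ f : P ⟶ M, f = 0

/-- `M` is basic: no indecomposable module occurs twice as a direct summand. -/
def IsBasic (M : ModuleCat.{0} B) : Prop :=
  ∀ N : ModuleCat.{0} B, Indecomp B N → ¬ IsSummand B (N ⊞ N) M

/-- Both members of the pair are basic. -/
def IsBasicPair (M P : ModuleCat.{0} B) : Prop := IsBasic B M ∧ IsBasic B P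

/-- `(M, P)` is a support τ-tilting pair: a τ-rigid pair with `|M| + |P| = |B|`. -/
def IsSuppPair (M P : ModuleCat.{0} B) : Prop :=
  IsTauRigidPair B M P ∧ numIndec B M + numIndec B P = algRank B

/-- `(L, R)` is a direct summand of the pair `(M, P)`. -/
def PairSummand (L R M P : ModuleCat.{0} B) : Prop := IsSummand B L M ∧ IsSummand B R P

/-- The pairs `(M, P)` and `(N, Q)` are isomorphic. -/
def PairIso (M P N Q : ModuleCat.{0} B) : Prop := Nonempty (M ≅ N) ∧ Nonempty (P ≅ Q)

/-- `(M,P)` and `(N,Q)` are mutations of each other: both are basic support τ-tilting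
pairs, they are not isomorphic, and they share a common almost complete support
τ-tilting pair (a basic τ-rigid pair with `|B| - 1` indecomposable summands) as a direct
summand; equivalently, they differ in exactly one indecomposable direct summand. -/
def AreMutation (M P N Q : ModuleCat.{0} B) : Prop :=
  IsBasicPair B M P ∧ IsSuppPair B M P ∧ IsBasicPair B N Q ∧ IsSuppPair B N Q ∧
  ¬ PairIso B M P N Q ∧
  ∃ L R : ModuleCat.{0} B, IsBasicPair B L R ∧ IsTauRigidPair B L R ∧
    numIndec B L + numIndec B R + 1 = algRank B ∧
    PairSummand B L R M P ∧ PairSummand B L R N Q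

/-- The type of basic support τ-tilting pairs. -/
def STP : Type 1 :=
  {p : ModuleCat.{0} B × ModuleCat.{0} B // IsBasicPair B p.1 p.2 ∧ IsSuppPair B p.1 p.2}

/-- The setoid identifying isomorphic basic support τ-tilting pairs. -/
def stpSetoid : Setoid (STP B) where
  r p q := PairIso B p.val.1 p.val.2 q.val.1 q.val.2
  iseqv := ⟨fun p => ⟨⟨Iso.refl _⟩, ⟨Iso.refl _⟩⟩,
    fun h => ⟨h.1.elim fun e => ⟨e.symm⟩, h.2.elim fun e => ⟨e.symm⟩⟩,
    fun h h' => ⟨h.1.elim fun e => h'.1.elim fun f => ⟨e ≪≫ f⟩,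
      h.2.elim fun e => h'.2.elim fun f => ⟨e ≪≫ f⟩⟩⟩

/-- Isomorphism classes of basic support τ-tilting pairs: the vertices of the
support τ-tilting graph. -/
def STPClass : Type 1 := Quotient (stpSetoid B)

/-- Two basic support τ-tilting pairs share an almost complete support τ-tilting pair
as a common direct summand. -/
def MutationAdj (p q : STP B) : Prop :=
  ∃ L R : ModuleCat.{0} B, IsBasicPair B L R ∧ IsTauRigidPair B L R ∧
    numIndec B L + numIndec B R + 1 = algRank B ∧
    PairSummand B L R p.val.1 p.val.2 ∧ PairSummand B L R q.val.1 q.val.2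

/-- The support τ-tilting graph `H(sτ-tilt B)`: vertices are the isomorphism classes of
basic support τ-tilting pairs, and two distinct classes are joined by an edge iff they
are mutations of each other (i.e. they differ in exactly one indecomposable direct
summand, equivalently they share a common almost complete direct summand). -/
def tauTiltingGraph : SimpleGraph (STPClass B) where
  Adj x y := x ≠ y ∧ ∃ p q : STP B,
    Quotient.mk (stpSetoid B) p = x ∧ Quotient.mk (stpSetoid B) q = y ∧ MutationAdj B p q
  symm := by
    refine ⟨?_⟩
    rintro x y ⟨h, p, q, hp, hq, L, R, h1, h2, h3, h4, h5⟩
    exact ⟨h.symm, q, p, hq, hp, L, R, h1, h2, h3, h5, h4⟩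
  loopless := by refine ⟨?_⟩; rintro x ⟨h, -⟩; exact h rfl

/-- The face of the support τ-tilting graph determined by a τ-rigid pair `(L, R)`:
all (isomorphism classes of) basic support τ-tilting pairs admitting `(L, R)` as a
direct summand. -/
def faceSet (L R : ModuleCat.{0} B) : Set (STPClass B) :=
  {x | ∃ p : STP B, Quotient.mk (stpSetoid B) p = x ∧ PairSummand B L R p.val.1 p.val.2}

/-- `B` has the reachable-in-face property: whenever two basic support τ-tilting pairs
having a common direct summand `(L, R)` are connected by a path in the support
τ-tilting graph, they are connected by a path lying in the face `F_{(L,R)}`. -/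
def ReachableInFace : Prop :=
  ∀ (L R : ModuleCat.{0} B), IsBasicPair B L R → IsTauRigidPair B L R →
    ∀ (x y : STPClass B) (hx : x ∈ faceSet B L R) (hy : y ∈ faceSet B L R),
      (tauTiltingGraph B).Reachable x y →
      ((tauTiltingGraph B).induce (faceSet B L R)).Reachable ⟨x, hx⟩ ⟨y, hy⟩

/-- The pair `(M, P)` is indecomposable: `|M| + |P| = 1`. -/
def IndecPair (M P : ModuleCat.{0} B) : Prop := numIndec B M + numIndec B P = 1

/-- `(M,P)` is τ-reachable from `(N,Q)`: there is a sequence of (nonzero) τ-rigid pairs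
`(M₁,P₁), …, (M_s,P_s)` such that the pairs `(M ⊕ M₁, P ⊕ P₁)`, `(M₁ ⊕ M₂, P₁ ⊕ P₂)`,
…, `(M_s ⊕ N, P_s ⊕ Q)` are all τ-rigid pairs.  (The intermediate pairs are required
to be nonzero, as is implicit in the paper: compare Remarks 3.5 and 3.6 there.) -/
def TauReachable (M P N Q : ModuleCat.{0} B) : Prop :=
  ∃ (s : ℕ) (c : Fin (s + 2) → ModuleCat.{0} B × ModuleCat.{0} B),
    c 0 = (M, P) ∧ c (Fin.last (s + 1)) = (N, Q) ∧
    (∀ j : Fin (s + 2), j ≠ 0 → j ≠ Fin.last (s + 1) →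
      ¬ (IsZero (c j).1 ∧ IsZero (c j).2)) ∧
    ∀ i : Fin (s + 1),
      IsTauRigidPair B ((c i.castSucc).1 ⊞ (c i.succ).1) ((c i.castSucc).2 ⊞ (c i.succ).2)

/-- `B` has the τ-reachable property: any two indecomposable τ-rigid pairs are
τ-reachable from each other. -/
def TauReachableProp : Prop :=
  ∀ M P N Q : ModuleCat.{0} B, IsTauRigidPair B M P → IndecPair B M P →
    IsTauRigidPair B N Q → IndecPair B N Q → TauReachable B M P N Q

/-- The partial order on support τ-tilting pairs: `Fac M ⊆ Fac N`. -/
def FacLE (M N : ModuleCat.{0} B) : Prop := ∀ X, InFac B M X → InFac B N X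

/-- `(T, R)` is the Bongartz completion of the τ-rigid pair `(U, R)`: the maximal basic
support τ-tilting pair admitting `(U, R)` as a direct summand. -/
def IsBongartz (U R T : ModuleCat.{0} B) : Prop :=
  IsBasicPair B T R ∧ IsSuppPair B T R ∧ IsSummand B U T ∧
    ∀ M P : ModuleCat.{0} B, IsBasicPair B M P → IsSuppPair B M P →
      PairSummand B U R M P → FacLE B M T

/-- `e ∈ End(T)` is the idempotent corresponding to a direct summand `U` of `T`
(for some choice of splitting). -/
def IsIdemFor (U T : ModuleCat.{0} B) (e : End T) : Prop :=
  ∃ (s : U ⟶ T) (r : T ⟶ U), s ≫ r = 𝟙 U ∧ e = r ≫ s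

/-- The algebra `B_{(U,R)} = End_B(T_{(U,R)}) / ⟨e_U⟩`: the quotient of the endomorphism
algebra of the Bongartz completion by the two-sided ideal generated by the idempotent
corresponding to the summand `U`. -/
abbrev quotAlg (T : ModuleCat.{0} B) (e : End T) : Type :=
  RingQuot (fun a b : End T => a = e ∧ b = 0)

/-- `B` is totally τ-reachable: for every basic τ-rigid pair `(U, R)`
(and any realization `T` of its Bongartz completion and idempotent `e = e_U`),
the algebra `B_{(U,R)} = End(T)/⟨e_U⟩` has the τ-reachable property whenever
`|B_{(U,R)}| > 1`. -/
def TotallyTauReachable : Prop :=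
  ∀ (U R : ModuleCat.{0} B), IsBasicPair B U R → IsTauRigidPair B U R →
    ∀ (T : ModuleCat.{0} B), IsBongartz B U R T →
      ∀ e : End T, IsIdemFor B U T e →
        1 < algRank (quotAlg B T e) → TauReachableProp (quotAlg B T e)

/-- `X ∈ ^⊥(τU)`, via the Auslander–Smalø characterization: `Hom_B(X, τU) = 0` iff
`Ext¹_B(U, Fac X) = 0`, i.e. every short exact sequence `0 → N → E → U → 0` with
`N ∈ Fac X` splits. -/
def InPerpTau (U X : ModuleCat.{0} B) : Prop :=
  ∀ (N E : ModuleCat.{0} B) (i : N ⟶ E) (p : E ⟶ U) (w : i ≫ p = 0),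
    (ShortComplex.mk i p w).ShortExact → InFac B X N → ∃ s : U ⟶ E, s ≫ p = 𝟙 U

/-- The subcategory `W(U,R) = ^⊥(τU) ∩ R^⊥ ∩ U^⊥` of `mod B`. -/
def Wcat (U R : ModuleCat.{0} B) : Set (ModuleCat.{0} B) :=
  {X | Module.Finite B X ∧ InPerpTau B U X ∧ (∀ f : R ⟶ X, f = 0) ∧ (∀ f : U ⟶ X, f = 0)}

/-- A class of modules is a wide subcategory: closed under kernels, cokernels and
extensions. -/
def IsWide (W : Set (ModuleCat.{0} B)) : Prop :=
  (∀ (X Y : ModuleCat.{0} B) (f : X ⟶ Y), X ∈ W → Y ∈ W → kernel f ∈ W) ∧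
  (∀ (X Y : ModuleCat.{0} B) (f : X ⟶ Y), X ∈ W → Y ∈ W → cokernel f ∈ W) ∧
  (∀ (N E X : ModuleCat.{0} B) (i : N ⟶ E) (p : E ⟶ X) (w : i ≫ p = 0),
    (ShortComplex.mk i p w).ShortExact → N ∈ W → X ∈ W → E ∈ W)

end STT

namespace STT

/-! ### Gentle algebras

A gentle presentation is encoded by the combinatorial data of a finite quiver
`(V, E, src, tgt)` together with the set `rel` of composable paths of length two
generating the ideal `I` (condition (G4)), subject to the combinatorial conditions
(G1)–(G3), and the path algebra `kQ/I` is presented by generators and relations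
as a quotient of the free algebra on the vertices and arrows. -/

/-- The combinatorial data of a quiver with a chosen set of length-two relations.
`rel β α` means that the length-two path "`α` followed by `β`" belongs to `I`. -/
structure GentleQuiver : Type 1 where
  V : Type
  E : Type
  [fV : Fintype V]
  [fE : Fintype E]
  src : E → V
  tgt : E → V
  rel : E → E → Prop

namespace GentleQuiver

variable (D : GentleQuiver)

/-- Conditions (G1)–(G3) of a gentle presentation (condition (G4) holds by
construction, since the ideal is generated by the chosen paths of length two):
(G1) each vertex is the source of at most two arrows and the target of at most two
arrows; (G2) for each arrow `α` there is at most one `β` with `βα ∈ I` and at most one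
`γ` with `γα ∉ I`; (G3) dually on the other side. -/
def Conds : Prop :=
  (∀ β α, D.rel β α → D.src β = D.tgt α) ∧
  (∀ v : D.V, ∀ a b c : D.E, D.src a = v → D.src b = v → D.src c = v →
    a = b ∨ a = c ∨ b = c) ∧
  (∀ v : D.V, ∀ a b c : D.E, D.tgt a = v → D.tgt b = v → D.tgt c = v →
    a = b ∨ a = c ∨ b = c) ∧
  (∀ α β β', D.rel β α → D.rel β' α → β = β') ∧
  (∀ α γ γ', D.src γ = D.tgt α → ¬ D.rel γ α → D.src γ' = D.tgt α → ¬ D.rel γ' α →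
    γ = γ') ∧
  (∀ α β β', D.rel α β → D.rel α β' → β = β') ∧
  (∀ α γ γ', D.tgt γ = D.src α → ¬ D.rel α γ → D.tgt γ' = D.src α → ¬ D.rel α γ' →
    γ = γ')

/-- The defining relations of the quotient `kQ/I` of the free algebra on the vertices
(as orthogonal idempotents summing to `1`) and the arrows (composing according to the
quiver structure), where `I` is generated by the length-two paths in `rel`. -/
def rels (k : Type) [CommRing k] :
    FreeAlgebra k (D.V ⊕ D.E) → FreeAlgebra k (D.V ⊕ D.E) → Prop := fun x y =>
  letI := D.fV
  (∃ v w : D.V, v ≠ w ∧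
    x = FreeAlgebra.ι k (Sum.inl v) * FreeAlgebra.ι k (Sum.inl w) ∧ y = 0) ∨
  (∃ v : D.V, x = FreeAlgebra.ι k (Sum.inl v) * FreeAlgebra.ι k (Sum.inl v) ∧
    y = FreeAlgebra.ι k (Sum.inl v)) ∨
  (x = (Finset.univ.sum fun v : D.V => FreeAlgebra.ι k (Sum.inl v)) ∧ y = 1) ∨
  (∃ a : D.E, x = FreeAlgebra.ι k (Sum.inl (D.tgt a)) * FreeAlgebra.ι k (Sum.inr a) ∧
    y = FreeAlgebra.ι k (Sum.inr a)) ∨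
  (∃ a : D.E, x = FreeAlgebra.ι k (Sum.inr a) * FreeAlgebra.ι k (Sum.inl (D.src a)) ∧
    y = FreeAlgebra.ι k (Sum.inr a)) ∨
  (∃ (a : D.E) (v : D.V), v ≠ D.tgt a ∧
    x = FreeAlgebra.ι k (Sum.inl v) * FreeAlgebra.ι k (Sum.inr a) ∧ y = 0) ∨
  (∃ (a : D.E) (v : D.V), v ≠ D.src a ∧
    x = FreeAlgebra.ι k (Sum.inr a) * FreeAlgebra.ι k (Sum.inl v) ∧ y = 0) ∨
  (∃ β α : D.E, D.rel β α ∧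
    x = FreeAlgebra.ι k (Sum.inr β) * FreeAlgebra.ι k (Sum.inr α) ∧ y = 0)

end GentleQuiver

/-- `A` is a gentle `k`-algebra: `A` is finite-dimensional over `k` and admits a
presentation `A ≅ kQ/I` for a gentle quiver with relations `(Q, I)`, i.e. satisfying
conditions (G1)–(G4). -/
def IsGentleAlgebra (k : Type) [Field k] (A : Type) [Ring A] [Algebra k A] : Prop :=
  Module.Finite k A ∧
    ∃ D : GentleQuiver, D.Conds ∧ Nonempty (A ≃ₐ[k] RingQuot (D.rels k))

end STT

set_option maxHeartbeats 1600000
set_option synthInstance.maxHeartbeats 400000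

namespace GentleAux

open STT FreeAlgebra

variable (k : Type) [Field k] (D : STT.GentleQuiver)

abbrev L := RingQuot (D.rels k)

noncomputable def mk : FreeAlgebra k (D.V ⊕ D.E) →ₐ[k] L k D :=
  RingQuot.mkAlgHom k (D.rels k)

noncomputable def ev (v : D.V) : L k D := mk k D (FreeAlgebra.ι k (Sum.inl v))

noncomputable def ar (a : D.E) : L k D := mk k D (FreeAlgebra.ι k (Sum.inr a))

variable {k D}

lemma mk_rel {x y : FreeAlgebra k (D.V ⊕ D.E)} (h : D.rels k x y) :
    mk k D x = mk k D y := RingQuot.mkAlgHom_rel k h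

lemma ev_mul_ev_ne {v w : D.V} (h : v ≠ w) : ev k D v * ev k D w = 0 := by
  have := mk_rel (k := k) (D := D) (Or.inl ⟨v, w, h, rfl, rfl⟩)
  simpa [ev, map_mul] using this

lemma ev_idem (v : D.V) : ev k D v * ev k D v = ev k D v := by
  have := mk_rel (k := k) (D := D) (Or.inr (Or.inl ⟨v, rfl, rfl⟩))
  simpa [ev, map_mul] using this

lemma sum_ev : (@Finset.univ D.V D.fV).sum (fun v => ev k D v) = 1 := by
  have := mk_rel (k := k) (D := D) (Or.inr (Or.inr (Or.inl ⟨rfl, rfl⟩)))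
  simpa [ev, map_sum] using this

lemma tgt_ar (a : D.E) : ev k D (D.tgt a) * ar k D a = ar k D a := by
  have := mk_rel (k := k) (D := D)
    (Or.inr (Or.inr (Or.inr (Or.inl ⟨a, rfl, rfl⟩))))
  simpa [ev, ar, map_mul] using this

lemma ar_src (a : D.E) : ar k D a * ev k D (D.src a) = ar k D a := by
  have := mk_rel (k := k) (D := D)
    (Or.inr (Or.inr (Or.inr (Or.inr (Or.inl ⟨a, rfl, rfl⟩)))))
  simpa [ev, ar, map_mul] using this

lemma ev_mul_ar {v : D.V} {a : D.E} (h : v ≠ D.tgt a) : ev k D v * ar k D a = 0 := by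
  have := mk_rel (k := k) (D := D)
    (Or.inr (Or.inr (Or.inr (Or.inr (Or.inr (Or.inl ⟨a, v, h, rfl, rfl⟩))))))
  simpa [ev, ar, map_mul] using this

lemma ar_mul_ev {v : D.V} {a : D.E} (h : v ≠ D.src a) : ar k D a * ev k D v = 0 := by
  have := mk_rel (k := k) (D := D)
    (Or.inr (Or.inr (Or.inr (Or.inr (Or.inr (Or.inr (Or.inl ⟨a, v, h, rfl, rfl⟩)))))))
  simpa [ev, ar, map_mul] using this

lemma rel_zero {b a : D.E} (h : D.rel b a) : ar k D b * ar k D a = 0 := by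
  have := mk_rel (k := k) (D := D)
    (Or.inr (Or.inr (Or.inr (Or.inr (Or.inr (Or.inr (Or.inr ⟨b, a, h, rfl, rfl⟩)))))))
  simpa [ar, map_mul] using this

end GentleAux


section Aux2

open STT FreeAlgebra
open scoped Classical

namespace GentleAux

variable {k : Type} [Field k] {D : STT.GentleQuiver}

lemma algHom_ext {B : Type} [Semiring B] [Algebra k B] (f g : L k D →ₐ[k] B)
    (h : ∀ x, f (mk k D (FreeAlgebra.ι k x)) = g (mk k D (FreeAlgebra.ι k x))) : f = g := by
  refine RingQuot.ringQuot_ext' k _ _ (FreeAlgebra.hom_ext (funext fun x => ?_))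
  simpa [Function.comp, mk] using h x

/-- single-entry function -/
noncomputable def sing (v : D.V) : D.V → k := Pi.single v 1

lemma sing_mul_self (v : D.V) : sing (k := k) v * sing v = sing v := by
  funext u
  simp only [sing, Pi.mul_apply, Pi.single_apply]
  split <;> simp

lemma sing_mul_ne {v w : D.V} (hvw : v ≠ w) : sing (k := k) v * sing w = 0 := by
  funext u
  simp only [sing, Pi.mul_apply, Pi.single_apply, Pi.zero_apply]
  by_cases hv : u = v <;> by_cases hw : u = w <;> simp_all

noncomputable def piHom : L k D →ₐ[k] (D.V → k) :=
  RingQuot.liftAlgHom k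
    ⟨FreeAlgebra.lift k (Sum.elim (fun v => sing (k := k) v) (fun _ => 0)), by
      rintro x y (⟨v, w, hvw, rfl, rfl⟩ | ⟨v, rfl, rfl⟩ | ⟨rfl, rfl⟩ |
        ⟨a, rfl, rfl⟩ | ⟨a, rfl, rfl⟩ | ⟨a, v, hv, rfl, rfl⟩ | ⟨a, v, hv, rfl, rfl⟩ |
        ⟨b, a, hba, rfl, rfl⟩)
      · simp [sing_mul_ne hvw]
      · simp [sing_mul_self]
      · simp only [map_sum, map_one, FreeAlgebra.lift_ι_apply, Sum.elim_inl]
        funext u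
        simp [sing, Finset.sum_apply, Finset.sum_pi_single]
      · simp
      · simp
      · simp
      · simp
      · simp⟩

lemma piHom_ev (v : D.V) : piHom (ev k D v) = sing (k := k) v := by
  simp [piHom, ev, mk, RingQuot.liftAlgHom_mkAlgHom_apply, FreeAlgebra.lift_ι_apply]

lemma piHom_ar (a : D.E) : piHom (ar k D a) = 0 := by
  simp [piHom, ar, mk, RingQuot.liftAlgHom_mkAlgHom_apply, FreeAlgebra.lift_ι_apply]

end GentleAux

end Aux2


section Aux3

open STT FreeAlgebra Polynomial
open scoped Classical

namespace GentleAux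

variable {k : Type} [Field k] {D : STT.GentleQuiver}

noncomputable def Phi : L k D →ₐ[k] Polynomial (L k D) :=
  RingQuot.liftAlgHom k
    ⟨FreeAlgebra.lift k (Sum.elim (fun v => (C (ev k D v) : Polynomial (L k D)))
        (fun a => C (ar k D a) * X)), by
      rintro x y (⟨v, w, hvw, rfl, rfl⟩ | ⟨v, rfl, rfl⟩ | ⟨rfl, rfl⟩ |
        ⟨a, rfl, rfl⟩ | ⟨a, rfl, rfl⟩ | ⟨a, v, hv, rfl, rfl⟩ | ⟨a, v, hv, rfl, rfl⟩ |
        ⟨b, a, hba, rfl, rfl⟩) <;>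
        simp only [map_mul, map_sum, map_one, map_zero, FreeAlgebra.lift_ι_apply,
          Sum.elim_inl, Sum.elim_inr]
      · rw [← map_mul, ev_mul_ev_ne hvw, map_zero]
      · rw [← map_mul, ev_idem]
      · rw [← map_sum, sum_ev, map_one]
      · rw [← mul_assoc, ← map_mul, tgt_ar]
      · rw [mul_assoc, X_mul, ← mul_assoc, ← map_mul, ar_src]
      · rw [← mul_assoc, ← map_mul, ev_mul_ar hv, map_zero, zero_mul]
      · rw [mul_assoc, X_mul (p := C (ev k D v)), ← mul_assoc, ← map_mul, ar_mul_ev hv,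
          map_zero, zero_mul]
      · rw [mul_assoc, ← mul_assoc X (C (ar k D a)) X, X_mul (p := C (ar k D a)),
          mul_assoc (C (ar k D a)), ← mul_assoc (C (ar k D b)), ← map_mul,
          rel_zero hba, map_zero, zero_mul]⟩

lemma Phi_ev (v : D.V) : Phi (ev k D v) = C (ev k D v) := by
  simp [Phi, ev, mk, RingQuot.liftAlgHom_mkAlgHom_apply, FreeAlgebra.lift_ι_apply]

lemma Phi_ar (a : D.E) : Phi (ar k D a) = C (ar k D a) * X := by
  simp [Phi, ar, mk, RingQuot.liftAlgHom_mkAlgHom_apply, FreeAlgebra.lift_ι_apply]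

/-- The abstract degree-`m` part. -/
noncomputable def Sdeg (m : ℕ) : Submodule k (L k D) where
  carrier := {x | Phi x = C x * X ^ m}
  add_mem' := by
    intro a b ha hb
    simp only [Set.mem_setOf_eq] at *
    rw [map_add, ha, hb, map_add, add_mul]
  zero_mem' := by simp
  smul_mem' := by
    intro c x hx
    simp only [Set.mem_setOf_eq] at *
    rw [map_smul, hx, ← Polynomial.smul_C, smul_mul_assoc]

lemma mem_Sdeg {m : ℕ} {x : L k D} : x ∈ Sdeg m ↔ Phi x = C x * X ^ m := Iff.rfl

noncomputable def B0 : Submodule k (L k D) := Submodule.span k (Set.range (ev k D))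

noncomputable def B1 : Submodule k (L k D) := Submodule.span k (Set.range (ar k D))

noncomputable def W (m : ℕ) : Submodule k (L k D) := B0 * B1 ^ m

lemma B0_le_S0 : (B0 : Submodule k (L k D)) ≤ Sdeg 0 :=
  Submodule.span_le.mpr (by rintro x ⟨v, rfl⟩; rw [SetLike.mem_coe, mem_Sdeg, Phi_ev,
    pow_zero, mul_one])

lemma B1_le_S1 : (B1 : Submodule k (L k D)) ≤ Sdeg 1 :=
  Submodule.span_le.mpr (by rintro x ⟨a, rfl⟩; rw [SetLike.mem_coe, mem_Sdeg, Phi_ar, pow_one])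

lemma Sdeg_mul (i j : ℕ) : (Sdeg i : Submodule k (L k D)) * Sdeg j ≤ Sdeg (i + j) := by
  rw [Submodule.mul_le]
  intro x hx y hy
  rw [mem_Sdeg] at *
  rw [map_mul, hx, hy, pow_add, mul_assoc, ← mul_assoc (X ^ i) (C y) (X ^ j),
    X_pow_mul, mul_assoc (C y), ← mul_assoc (C x), ← map_mul]

lemma B1_pow_le_S (m : ℕ) : (B1 : Submodule k (L k D)) ^ m ≤ Sdeg m := by
  induction m with
  | zero =>
    rw [pow_zero, Submodule.one_le]
    rw [mem_Sdeg]; simp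
  | succ i ih =>
    rw [pow_succ]
    exact (mul_le_mul' ih B1_le_S1).trans (Sdeg_mul i 1)

lemma W_le_S (m : ℕ) : (W m : Submodule k (L k D)) ≤ Sdeg m := by
  refine (mul_le_mul' B0_le_S0 (B1_pow_le_S m)).trans ?_
  have h := Sdeg_mul (k := k) (D := D) 0 m
  rwa [Nat.zero_add] at h

lemma B0_mul_B0 : (B0 : Submodule k (L k D)) * B0 ≤ B0 := by
  rw [B0, Submodule.span_mul_span, Submodule.span_le]
  rintro x hx
  rw [Set.mem_mul] at hx
  obtain ⟨y, ⟨v, rfl⟩, z, ⟨w, rfl⟩, rfl⟩ := hx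
  by_cases hvw : v = w
  · subst hvw; rw [ev_idem]; exact Submodule.subset_span ⟨v, rfl⟩
  · rw [ev_mul_ev_ne hvw]; exact (Submodule.span k _).zero_mem

lemma B1_mul_B0 : (B1 : Submodule k (L k D)) * B0 ≤ B1 := by
  rw [B0, B1, Submodule.span_mul_span, Submodule.span_le]
  rintro x hx
  rw [Set.mem_mul] at hx
  obtain ⟨y, ⟨a, rfl⟩, z, ⟨v, rfl⟩, rfl⟩ := hx
  by_cases hv : v = D.src a
  · subst hv; rw [ar_src]; exact Submodule.subset_span ⟨a, rfl⟩
  · rw [ar_mul_ev hv]; exact (Submodule.span k _).zero_mem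

lemma B1_le_B0_mul_B1 : (B1 : Submodule k (L k D)) ≤ B0 * B1 := by
  rw [B1, Submodule.span_le]
  rintro x ⟨a, rfl⟩
  rw [SetLike.mem_coe, ← tgt_ar a]
  exact Submodule.mul_mem_mul (Submodule.subset_span ⟨_, rfl⟩)
    (Submodule.subset_span ⟨_, rfl⟩)

lemma B1_pow_mul_B0 (i : ℕ) : (B1 : Submodule k (L k D)) ^ i * B0 ≤ B0 * B1 ^ i := by
  induction i with
  | zero => rw [pow_zero, one_mul, mul_one]
  | succ i ih =>
    calc B1 ^ (i + 1) * B0 = B1 ^ i * (B1 * B0) := by rw [pow_succ, mul_assoc]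
    _ ≤ B1 ^ i * B1 := mul_le_mul' le_rfl B1_mul_B0
    _ = B1 * B1 ^ i := by rw [← pow_succ, pow_succ']
    _ ≤ (B0 * B1) * B1 ^ i := mul_le_mul' B1_le_B0_mul_B1 le_rfl
    _ = B0 * (B1 * B1 ^ i) := by rw [mul_assoc]
    _ = B0 * B1 ^ (i + 1) := by rw [← pow_succ']

lemma W_mul_W (i j : ℕ) : (W i : Submodule k (L k D)) * W j ≤ W (i + j) := by
  calc W i * W j = B0 * ((B1 ^ i * B0) * B1 ^ j) := by
        rw [W, W, mul_assoc, mul_assoc]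
  _ ≤ B0 * ((B0 * B1 ^ i) * B1 ^ j) :=
      mul_le_mul' le_rfl (mul_le_mul' (B1_pow_mul_B0 i) le_rfl)
  _ = (B0 * B0) * (B1 ^ i * B1 ^ j) := by
        rw [mul_assoc (B0 (k := k) (D := D)) (B1 ^ i) (B1 ^ j), ← mul_assoc, ← mul_assoc]
  _ ≤ B0 * B1 ^ (i + j) := by
        rw [← pow_add]
        exact mul_le_mul' B0_mul_B0 le_rfl

lemma one_mem_B0 : (1 : L k D) ∈ B0 := by
  rw [← sum_ev]
  exact Submodule.sum_mem _ fun v _ => Submodule.subset_span ⟨v, rfl⟩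

lemma W_zero : (W 0 : Submodule k (L k D)) = B0 := by rw [W, pow_zero, mul_one]

lemma W_one : (W 1 : Submodule k (L k D)) = B0 * B1 := by rw [W, pow_one]

lemma sup_W_top : (⨆ m, W m : Submodule k (L k D)) = ⊤ := by
  have hmul : ∀ x ∈ (⨆ m, W m : Submodule k (L k D)), ∀ y ∈ (⨆ m, W m : Submodule k (L k D)),
      x * y ∈ (⨆ m, W m : Submodule k (L k D)) := by
    intro x hx y hy
    have hxy : x * y ∈ (⨆ m, W m : Submodule k (L k D)) * (⨆ m, W m) :=
      Submodule.mul_mem_mul hx hy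
    refine SetLike.le_def.mp ?_ hxy
    rw [Submodule.iSup_mul]
    refine iSup_le fun i => ?_
    rw [Submodule.mul_iSup]
    exact iSup_le fun j => (W_mul_W i j).trans (le_iSup _ (i + j))
  have h1 : (1 : L k D) ∈ (⨆ m, W m : Submodule k (L k D)) :=
    SetLike.le_def.mp (le_iSup _ 0) (W_zero (k := k) (D := D) ▸ one_mem_B0)
  refine top_unique fun x hx => ?_
  clear hx
  obtain ⟨y, rfl⟩ := RingQuot.mkAlgHom_surjective k (D.rels k) x
  induction y using FreeAlgebra.induction with
  | grade0 r =>
    rw [AlgHom.commutes]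
    have h1' : algebraMap k (L k D) r = r • 1 := Algebra.algebraMap_eq_smul_one r
    rw [h1']
    exact Submodule.smul_mem _ r h1
  | grade1 g =>
    rcases g with v | a
    · exact SetLike.le_def.mp (le_iSup _ 0) (W_zero (k := k) (D := D) ▸
        Submodule.subset_span ⟨v, rfl⟩)
    · exact SetLike.le_def.mp (le_iSup _ 1) (W_one (k := k) (D := D) ▸
        SetLike.le_def.mp B1_le_B0_mul_B1 (Submodule.subset_span ⟨a, rfl⟩))
  | mul a b ha hb => rw [map_mul]; exact hmul _ ha _ hb
  | add a b ha hb => rw [map_add]; exact Submodule.add_mem _ ha hb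

noncomputable def Kker : Submodule k (L k D) := LinearMap.ker (piHom (k := k) (D := D)).toLinearMap

lemma mem_Kker {x : L k D} : x ∈ (Kker : Submodule k (L k D)) ↔ piHom x = 0 := by
  simp [Kker, LinearMap.mem_ker]

lemma Kker_mul_le (P : Submodule k (L k D)) : Kker * P ≤ Kker := by
  rw [Submodule.mul_le]
  intro x hx y _
  rw [mem_Kker] at *
  rw [map_mul, hx, zero_mul]

lemma mul_Kker_le (P : Submodule k (L k D)) : P * Kker ≤ Kker := by
  rw [Submodule.mul_le]
  intro x _ y hy
  rw [mem_Kker] at *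
  rw [map_mul, hy, mul_zero]

lemma B1_le_Kker : (B1 : Submodule k (L k D)) ≤ Kker := by
  rw [B1, Submodule.span_le]
  rintro x ⟨a, rfl⟩
  rw [SetLike.mem_coe, mem_Kker]
  exact piHom_ar a

lemma W_le_Kker (i : ℕ) (hi : 1 ≤ i) : (W i : Submodule k (L k D)) ≤ Kker := by
  obtain ⟨j, rfl⟩ := Nat.exists_eq_add_of_le hi
  rw [W, pow_add, pow_one]
  calc B0 * ((B1 : Submodule k (L k D)) * B1 ^ j) ≤ B0 * (Kker * B1 ^ j) :=
        mul_le_mul' le_rfl (mul_le_mul' B1_le_Kker le_rfl)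
  _ ≤ B0 * Kker := mul_le_mul' le_rfl (Kker_mul_le _)
  _ ≤ Kker := mul_Kker_le _

end GentleAux

end Aux3


section Aux4

open STT Polynomial
open scoped Classical

namespace GentleAux

variable {k : Type} [Field k] {D : STT.GentleQuiver}

lemma piHom_B0_inj {x : L k D} (hx : x ∈ (B0 : Submodule k (L k D)))
    (h : piHom x = 0) : x = 0 := by
  letI := D.fV
  rw [B0] at hx
  obtain ⟨c, rfl⟩ := (Submodule.mem_span_range_iff_exists_fun k).mp hx
  rw [map_sum] at h
  simp_rw [map_smul, piHom_ev] at h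
  have hc : ∀ w, c w = 0 := by
    intro w
    have hw := congrFun h w
    rw [Finset.sum_apply] at hw
    simp only [Pi.smul_apply, sing, Pi.single_apply, smul_eq_mul, mul_ite, mul_one,
      mul_zero, Pi.zero_apply] at hw
    rwa [Finset.sum_ite_eq Finset.univ w c, if_pos (Finset.mem_univ w)] at hw
  simp only [hc, zero_smul]
  exact Finset.sum_const_zero

lemma exists_pow_ker_zero [Module.Finite k (L k D)] :
    ∃ M : ℕ, 0 < M ∧ ∀ x : L k D, piHom x = 0 → x ^ M = 0 := by
  classical
  have hfin : {m : ℕ | (W m : Submodule k (L k D)) ≠ ⊥}.Finite := by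
    by_contra hinf
    have hinf' : Set.Infinite {m : ℕ | (W m : Submodule k (L k D)) ≠ ⊥} := hinf
    obtain ⟨t, hts, htc⟩ := hinf'.exists_subset_card_eq (Module.finrank k (L k D) + 1)
    have hmem : ∀ i : t, (W (i : ℕ) : Submodule k (L k D)) ≠ ⊥ := fun i => hts i.2
    choose x hxW hx0 using fun i : t => (Submodule.ne_bot_iff _).mp (hmem i)
    have hSd : ∀ j : t, Phi (x j) = C (x j) * X ^ (j : ℕ) :=
      fun j => (W_le_S _ (hxW j) : _)
    have hli : LinearIndependent k x := by
      rw [linearIndependent_iff']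
      intro s g hsum i hi
      have hPhi := congrArg (Phi (k := k) (D := D)) hsum
      rw [map_sum, map_zero] at hPhi
      have hco := congrArg (fun p => Polynomial.coeff p (i : ℕ)) hPhi
      simp only [Polynomial.finset_sum_coeff, Polynomial.coeff_zero] at hco
      have hterm : ∀ j ∈ s, Polynomial.coeff (Phi (g j • x j)) (i : ℕ)
          = if (j : ℕ) = (i : ℕ) then g j • x j else 0 := by
        intro j _
        rw [map_smul, hSd j, Polynomial.coeff_smul, Polynomial.coeff_C_mul_X_pow]
        by_cases hij : (i : ℕ) = (j : ℕ)
        · rw [if_pos hij, if_pos hij.symm]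
        · rw [if_neg hij, if_neg (fun hh => hij hh.symm), smul_zero]
      rw [Finset.sum_congr rfl hterm] at hco
      rw [Finset.sum_eq_single i (fun j _ hji => by
            rw [if_neg (fun hh => hji (Subtype.ext hh))])
          (fun hni => absurd hi hni)] at hco
      rw [if_pos rfl] at hco
      rcases smul_eq_zero.mp hco with h | h
      · exact h
      · exact absurd h (hx0 i)
    have hcard := hli.fintype_card_le_finrank
    rw [Fintype.card_coe, htc] at hcard
    omega
  obtain ⟨M0, hM0⟩ := hfin.bddAbove
  have hWbot : ∀ m, M0 + 1 ≤ m → (W m : Submodule k (L k D)) = ⊥ := by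
    intro m hm
    by_contra hne
    have h2 : m ≤ M0 := hM0 hne
    omega
  refine ⟨M0 + 1, Nat.succ_pos _, fun x hx => ?_⟩
  have hxT : x ∈ (⨆ m, W m : Submodule k (L k D)) := by rw [sup_W_top]; trivial
  rw [Submodule.mem_iSup_iff_exists_finsupp] at hxT
  obtain ⟨f, hf, hsum⟩ := hxT
  have hpf0 : piHom (f 0) = 0 := by
    have h1 : piHom x = Finsupp.sum f fun _i xi => piHom xi := by
      rw [← hsum, map_finsuppSum]
    by_cases h0 : (0 : ℕ) ∈ f.support
    · rw [Finsupp.sum, Finset.sum_eq_single_of_mem 0 h0 (fun i _ hi =>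
        mem_Kker.mp (W_le_Kker i (Nat.one_le_iff_ne_zero.mpr hi) (hf i)))] at h1
      rw [← h1, hx]
    · rw [Finsupp.notMem_support_iff.mp h0, map_zero]
  have hf0 : f 0 = 0 := by
    refine piHom_B0_inj ?_ hpf0
    have h2 := hf 0
    rwa [W_zero] at h2
  have hxN : x ∈ (⨆ m, ⨆ (_ : 1 ≤ m), W m : Submodule k (L k D)) := by
    rw [← hsum, Finsupp.sum]
    refine Submodule.sum_mem _ fun i hi => ?_
    have hi0 : i ≠ 0 := by
      intro hh
      subst hh
      exact (Finsupp.mem_support_iff.mp hi) hf0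
    exact Submodule.mem_iSup_of_mem i
      (Submodule.mem_iSup_of_mem (Nat.one_le_iff_ne_zero.mpr hi0) (hf i))
  have hN1pow : ∀ s : ℕ,
      ((⨆ m, ⨆ (_ : 1 ≤ m), W m : Submodule k (L k D)) ^ s) ≤
        ⨆ m, ⨆ (_ : s ≤ m), (W m : Submodule k (L k D)) := by
    intro s
    induction s with
    | zero =>
      rw [pow_zero, Submodule.one_le]
      exact Submodule.mem_iSup_of_mem 0 (Submodule.mem_iSup_of_mem (Nat.le_refl 0)
        (W_zero (k := k) (D := D) ▸ one_mem_B0))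
    | succ s ih =>
      rw [pow_succ]
      refine le_trans (mul_le_mul' ih le_rfl) ?_
      rw [Submodule.iSup_mul]
      refine iSup_le fun m => ?_
      rw [Submodule.iSup_mul]
      refine iSup_le fun hm => ?_
      rw [Submodule.mul_iSup]
      refine iSup_le fun j => ?_
      rw [Submodule.mul_iSup]
      refine iSup_le fun hj => ?_
      refine (W_mul_W m j).trans ?_
      exact le_iSup_of_le (m + j) (le_iSup_of_le (by omega) le_rfl)
  have hxM : x ^ (M0 + 1) ∈ (⨆ m, ⨆ (_ : 1 ≤ m), W m : Submodule k (L k D)) ^ (M0 + 1) :=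
    Submodule.pow_mem_pow _ hxN _
  have hbot : ((⨆ m, ⨆ (_ : 1 ≤ m), W m : Submodule k (L k D)) ^ (M0 + 1)) ≤ ⊥ := by
    refine (hN1pow _).trans ?_
    refine iSup_le fun m => iSup_le fun hm => ?_
    rw [hWbot m hm]
  simpa using hbot hxM

end GentleAux

end Aux4


section Aux5

open STT
open scoped Classical

namespace GentleAux

variable {k : Type} [Field k]

/-- Two relations inducing the same quotient give isomorphic `RingQuot`s. -/
noncomputable def quotCongr {A : Type} [Ring A] [Algebra k A] (r s : A → A → Prop)
    (h1 : ∀ ⦃x y⦄, r x y → RingQuot.mkAlgHom k s x = RingQuot.mkAlgHom k s y)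
    (h2 : ∀ ⦃x y⦄, s x y → RingQuot.mkAlgHom k r x = RingQuot.mkAlgHom k r y) :
    RingQuot r ≃ₐ[k] RingQuot s :=
  AlgEquiv.ofAlgHom (RingQuot.liftAlgHom k ⟨RingQuot.mkAlgHom k s, h1⟩)
    (RingQuot.liftAlgHom k ⟨RingQuot.mkAlgHom k r, h2⟩)
    (RingQuot.ringQuot_ext' k _ _ (AlgHom.ext fun a => by
      simp [RingQuot.liftAlgHom_mkAlgHom_apply]))
    (RingQuot.ringQuot_ext' k _ _ (AlgHom.ext fun a => by
      simp [RingQuot.liftAlgHom_mkAlgHom_apply]))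

/-- Transport of a `RingQuot` by `a = e, b = 0` along an algebra isomorphism. -/
noncomputable def quotMapEquiv {A B : Type} [Ring A] [Ring B] [Algebra k A] [Algebra k B]
    (ψ : A ≃ₐ[k] B) (e : A) :
    RingQuot (fun a b : A => a = e ∧ b = 0) ≃ₐ[k]
      RingQuot (fun a b : B => a = ψ e ∧ b = 0) := by
  refine AlgEquiv.ofAlgHom
    (RingQuot.liftAlgHom k ⟨(RingQuot.mkAlgHom k _).comp ψ.toAlgHom, ?_⟩)
    (RingQuot.liftAlgHom k ⟨(RingQuot.mkAlgHom k _).comp ψ.symm.toAlgHom, ?_⟩) ?_ ?_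
  · rintro x y ⟨h1, h2⟩
    rw [h1, h2]
    have h := RingQuot.mkAlgHom_rel k (s := fun a b : B => a = ψ e ∧ b = 0)
      (x := ψ e) (y := 0) ⟨rfl, rfl⟩
    simpa using h
  · rintro x y ⟨h1, h2⟩
    rw [h1, h2]
    have h := RingQuot.mkAlgHom_rel k (s := fun a b : A => a = e ∧ b = 0)
      (x := e) (y := 0) ⟨rfl, rfl⟩
    simp only [AlgHom.coe_comp, Function.comp_apply, AlgEquiv.coe_algHom, map_zero]
    rw [AlgEquiv.symm_apply_apply]
    simpa using h
  · refine RingQuot.ringQuot_ext' k _ _ (AlgHom.ext fun a => ?_)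
    simp [RingQuot.liftAlgHom_mkAlgHom_apply]
  · refine RingQuot.ringQuot_ext' k _ _ (AlgHom.ext fun a => ?_)
    simp [RingQuot.liftAlgHom_mkAlgHom_apply]

variable {D : STT.GentleQuiver}

noncomputable def eS (S : Finset D.V) : L k D := S.sum (ev k D)

lemma ev_mul_eS {S : Finset D.V} {v : D.V} (hv : v ∈ S) :
    ev k D v * eS S = ev k D v := by
  rw [eS, Finset.mul_sum]
  rw [Finset.sum_eq_single v (fun w _ hw => ev_mul_ev_ne (Ne.symm hw))
    (fun h => absurd hv h)]
  exact ev_idem v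

lemma eS_mul_ev {S : Finset D.V} {v : D.V} (hv : v ∈ S) :
    eS S * ev k D v = ev k D v := by
  rw [eS, Finset.sum_mul]
  rw [Finset.sum_eq_single v (fun w _ hw => ev_mul_ev_ne hw) (fun h => absurd hv h)]
  exact ev_idem v

lemma eS_idem (S : Finset D.V) : (eS S : L k D) * eS S = eS S := by
  nth_rewrite 1 [eS]
  rw [Finset.sum_mul]
  exact Finset.sum_congr rfl fun v hv => ev_mul_eS hv

lemma conj_quot_equiv [Module.Finite k (L k D)] (ε : L k D) (hε : ε * ε = ε) :
    ∃ S : Finset D.V, Nonempty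
      ((RingQuot (fun a b : L k D => a = ε ∧ b = 0)) ≃ₐ[k]
        RingQuot (fun a b : L k D => a = eS S ∧ b = 0)) := by
  classical
  letI := D.fV
  obtain ⟨c, hc_def⟩ : ∃ c : D.V → k, c = piHom ε := ⟨_, rfl⟩
  have hcc : c * c = c := by rw [hc_def, ← map_mul, hε]
  refine ⟨Finset.univ.filter (fun v => c v = 1), ?_⟩
  obtain ⟨S, hS_def⟩ : ∃ S : Finset D.V, S = Finset.univ.filter (fun v => c v = 1) :=
    ⟨_, rfl⟩
  rw [← hS_def]
  have hc01 : ∀ v, c v = 0 ∨ c v = 1 := by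
    intro v
    have h2 : c v * c v = c v := congrFun hcc v
    have h3 : c v * (c v - 1) = 0 := by rw [mul_sub, mul_one, h2, sub_self]
    rcases mul_eq_zero.mp h3 with h | h
    · exact Or.inl h
    · exact Or.inr (sub_eq_zero.mp h)
  have hpi_eS : piHom (eS S : L k D) = c := by
    funext w
    rw [eS, map_sum, Finset.sum_apply]
    simp_rw [piHom_ev]
    have hterm : ∀ v ∈ S, sing (k := k) v w = if w = v then 1 else 0 := by
      intro v _
      rw [sing, Pi.single_apply]
    rw [Finset.sum_congr rfl hterm, Finset.sum_ite_eq S w (fun _ => (1 : k))]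
    by_cases hw : w ∈ S
    · rw [if_pos hw]
      exact ((Finset.mem_filter.mp (hS_def ▸ hw)).2).symm
    · rw [if_neg hw]
      rcases hc01 w with h | h
      · exact h.symm
      · exact absurd (hS_def ▸ Finset.mem_filter.mpr ⟨Finset.mem_univ w, h⟩) hw
  -- the conjugating unit
  obtain ⟨u, hu_def⟩ : ∃ u : L k D, u = eS S * ε + (1 - eS S) * (1 - ε) := ⟨_, rfl⟩
  have hu_eps : u * ε = eS S * ε := by
    have h1 : (1 - ε) * ε = 0 := by rw [sub_mul, one_mul, hε, sub_self]
    rw [hu_def, add_mul, mul_assoc, hε, mul_assoc, h1, mul_zero, add_zero]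
  have heS_u : eS S * u = eS S * ε := by
    have h1 : eS S * (1 - eS S) = (0 : L k D) := by
      rw [mul_sub, mul_one, eS_idem, sub_self]
    rw [hu_def, mul_add, ← mul_assoc, eS_idem, ← mul_assoc, h1, zero_mul, add_zero]
  have hkey : u * ε = eS S * u := by rw [hu_eps, heS_u]
  have hpi_u : piHom u = 1 := by
    rw [hu_def, map_add, map_mul, map_mul, map_sub, map_sub, map_one, hpi_eS, ← hc_def]
    linear_combination (2 : D.V → k) * hcc
  have hpi_n : piHom (1 - u) = 0 := by rw [map_sub, map_one, hpi_u, sub_self]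
  obtain ⟨M, hM0, hMn⟩ := exists_pow_ker_zero (k := k) (D := D)
  have hnM : (1 - u) ^ M = 0 := hMn _ hpi_n
  obtain ⟨w, hw_def⟩ : ∃ w : L k D, w = (Finset.range M).sum (fun i => (1 - u) ^ i) :=
    ⟨_, rfl⟩
  have hcomm : Commute (1 - u) w := by
    rw [hw_def]
    exact Commute.sum_right _ _ _ (fun i _ => (Commute.refl (1 - u)).pow_right i)
  have hwu : w * u = 1 := by
    have hg := geom_sum_mul (1 - u) M
    rw [hnM, zero_sub, ← hw_def] at hg
    have h10 : w * (1 - u) - w = -1 := by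
      rw [mul_sub, mul_one] at hg
      exact hg
    have h11 : w * u = w - w * (1 - u) := by
      rw [mul_sub, mul_one, sub_sub_cancel]
    rw [h11, ← neg_sub (w * (1 - u)) w, h10, neg_neg]
  have huw : u * w = 1 := by
    have h3 : Commute (1 - (1 - u)) w := Commute.sub_left (Commute.one_left w) hcomm
    have h4 : (1 : L k D) - (1 - u) = u := sub_sub_cancel 1 u
    rw [h4] at h3
    rw [h3.eq, hwu]
  -- ε = w * (eS S * u), eS S = (u * ε) * w
  have heps_eq : ε = w * (eS S * u) := by
    calc ε = (w * u) * ε := by rw [hwu, one_mul]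
    _ = w * (u * ε) := by rw [mul_assoc]
    _ = w * (eS S * u) := by rw [hkey]
  have heS_eq : eS S = (u * ε) * w := by
    calc eS S = eS S * (u * w) := by rw [huw, mul_one]
    _ = (eS S * u) * w := by rw [mul_assoc]
    _ = (u * ε) * w := by rw [← hkey]
  refine ⟨quotCongr _ _ ?_ ?_⟩
  · rintro x y ⟨h1, h2⟩
    rw [h1, h2]
    have h0 : RingQuot.mkAlgHom k (fun a b : L k D => a = eS S ∧ b = 0) (eS S) = 0 := by
      have h5 := RingQuot.mkAlgHom_rel k (s := fun a b : L k D => a = eS S ∧ b = 0)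
        (x := eS S) (y := 0) ⟨rfl, rfl⟩
      simpa using h5
    rw [heps_eq, map_mul, map_mul, h0, zero_mul, mul_zero, map_zero]
  · rintro x y ⟨h1, h2⟩
    rw [h1, h2]
    have h0 : RingQuot.mkAlgHom k (fun a b : L k D => a = ε ∧ b = 0) ε = 0 := by
      have h5 := RingQuot.mkAlgHom_rel k (s := fun a b : L k D => a = ε ∧ b = 0)
        (x := ε) (y := 0) ⟨rfl, rfl⟩
      simpa using h5
    rw [heS_eq, map_mul, map_mul, h0, mul_zero, zero_mul, map_zero]

end GentleAux

end Aux5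


section Aux6

open STT
open scoped Classical

namespace GentleAux

variable {k : Type} [Field k]

/-- The quiver obtained by deleting the vertices in `S` (and all adjacent arrows). -/
noncomputable def del (D : STT.GentleQuiver) (S : Finset D.V) : STT.GentleQuiver :=
  letI := D.fV
  letI := D.fE
  { V := {v : D.V // v ∉ S}
    E := {a : D.E // D.src a ∉ S ∧ D.tgt a ∉ S}
    src := fun a => ⟨D.src a.1, a.2.1⟩
    tgt := fun a => ⟨D.tgt a.1, a.2.2⟩
    rel := fun b a => D.rel b.1 a.1 }

lemma del_conds {D : STT.GentleQuiver} (h : D.Conds) (S : Finset D.V) :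
    (del D S).Conds := by
  obtain ⟨h0, h1, h2, h3, h4, h5, h6⟩ := h
  refine ⟨?_, ?_, ?_, ?_, ?_, ?_, ?_⟩
  · intro b a hr
    exact Subtype.ext (h0 b.1 a.1 hr)
  · intro v a b c ha hb hc
    rcases h1 v.1 a.1 b.1 c.1 (congrArg Subtype.val ha) (congrArg Subtype.val hb)
      (congrArg Subtype.val hc) with h | h | h
    · exact Or.inl (Subtype.ext h)
    · exact Or.inr (Or.inl (Subtype.ext h))
    · exact Or.inr (Or.inr (Subtype.ext h))
  · intro v a b c ha hb hc
    rcases h2 v.1 a.1 b.1 c.1 (congrArg Subtype.val ha) (congrArg Subtype.val hb)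
      (congrArg Subtype.val hc) with h | h | h
    · exact Or.inl (Subtype.ext h)
    · exact Or.inr (Or.inl (Subtype.ext h))
    · exact Or.inr (Or.inr (Subtype.ext h))
  · intro a b b' hb hb'
    exact Subtype.ext (h3 a.1 b.1 b'.1 hb hb')
  · intro a g g' hg hng hg' hng'
    exact Subtype.ext (h4 a.1 g.1 g'.1 (congrArg Subtype.val hg) hng
      (congrArg Subtype.val hg') hng')
  · intro a b b' hb hb'
    exact Subtype.ext (h5 a.1 b.1 b'.1 hb hb')
  · intro a g g' hg hng hg' hng'
    exact Subtype.ext (h6 a.1 g.1 g'.1 (congrArg Subtype.val hg) hng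
      (congrArg Subtype.val hg') hng')

variable {D : STT.GentleQuiver} {S : Finset D.V}

/-- The quotient of `L k D` by the ideal generated by `eS S`. -/
abbrev QS (k : Type) [Field k] (D : STT.GentleQuiver) (S : Finset D.V) : Type :=
  RingQuot (fun a b : L k D => a = eS S ∧ b = 0)

noncomputable def mkQ (k : Type) [Field k] (D : STT.GentleQuiver) (S : Finset D.V) :
    L k D →ₐ[k] QS k D S :=
  RingQuot.mkAlgHom k _

lemma mkQ_eS : mkQ k D S (eS S) = 0 := by
  have h := RingQuot.mkAlgHom_rel k (s := fun a b : L k D => a = eS S ∧ b = 0)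
    (x := eS S) (y := 0) ⟨rfl, rfl⟩
  simpa [mkQ] using h

lemma mkQ_ev_mem {v : D.V} (hv : v ∈ S) : mkQ k D S (ev k D v) = 0 := by
  rw [← ev_mul_eS hv, map_mul, mkQ_eS, mul_zero]

lemma mkQ_ar_src {a : D.E} (ha : D.src a ∈ S) : mkQ k D S (ar k D a) = 0 := by
  rw [← ar_src a, map_mul, mkQ_ev_mem ha, mul_zero]

lemma mkQ_ar_tgt {a : D.E} (ha : D.tgt a ∈ S) : mkQ k D S (ar k D a) = 0 := by
  rw [← tgt_ar a, map_mul, mkQ_ev_mem ha, zero_mul]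

lemma sum_univ_inst {X M : Type} [AddCommMonoid M] (i1 i2 : Fintype X) (f : X → M) :
    (@Finset.univ X i1).sum f = (@Finset.univ X i2).sum f := by
  rw [Subsingleton.elim i1 i2]

lemma sum_ev_compl :
    (@Finset.univ (del D S).V (del D S).fV).sum (fun v' => ev k D v'.1)
      = 1 - eS S := by
  letI := D.fV
  have h1 : ((Sᶜ : Finset D.V)).sum (fun v => ev k D v)
      = (@Finset.univ (del D S).V (del D S).fV).sum (fun v' => ev k D v'.1) := by
    exact Finset.sum_subtype (F := (del D S).fV) Sᶜ (fun x => Finset.mem_compl) _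
  rw [← h1, eq_sub_iff_add_eq, eS, Finset.sum_compl_add_sum, sum_ev]

/-- The forward map. -/
noncomputable def Fmap : L k (del D S) →ₐ[k] QS k D S :=
  RingQuot.liftAlgHom k
    ⟨FreeAlgebra.lift k (Sum.elim (fun v' => mkQ k D S (ev k D v'.1))
        (fun a' => mkQ k D S (ar k D a'.1))), by
      rintro x y (⟨v, w, hvw, rfl, rfl⟩ | ⟨v, rfl, rfl⟩ | ⟨rfl, rfl⟩ |
        ⟨a, rfl, rfl⟩ | ⟨a, rfl, rfl⟩ | ⟨a, v, hv, rfl, rfl⟩ | ⟨a, v, hv, rfl, rfl⟩ |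
        ⟨b, a, hba, rfl, rfl⟩) <;>
        simp only [map_mul, map_sum, map_one, map_zero, FreeAlgebra.lift_ι_apply,
          Sum.elim_inl, Sum.elim_inr]
      · rw [← map_mul, ev_mul_ev_ne (fun hh => hvw (Subtype.ext hh)), map_zero]
      · rw [← map_mul, ev_idem]
      · rw [← map_sum, sum_ev_compl, map_sub, map_one, mkQ_eS]
        exact sub_zero (1 : QS k D S)
      · rw [← map_mul]
        have ht : ((del D S).tgt a).1 = D.tgt a.1 := rfl
        rw [ht, tgt_ar]
      · rw [← map_mul]
        have hs : ((del D S).src a).1 = D.src a.1 := rfl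
        rw [hs, ar_src]
      · rw [← map_mul]
        have ht : ((del D S).tgt a).1 = D.tgt a.1 := rfl
        have hne : v.1 ≠ D.tgt a.1 := by
          intro hh
          exact hv (Subtype.ext (by rw [← ht] at hh; exact hh))
        rw [ev_mul_ar hne, map_zero]
      · rw [← map_mul]
        have hs : ((del D S).src a).1 = D.src a.1 := rfl
        have hne : v.1 ≠ D.src a.1 := by
          intro hh
          exact hv (Subtype.ext (by rw [← hs] at hh; exact hh))
        rw [ar_mul_ev hne, map_zero]
      · rw [← map_mul, rel_zero (show D.rel b.1 a.1 from hba), map_zero]⟩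

lemma Fmap_ev (v' : (del D S).V) :
    Fmap (mk k (del D S) (FreeAlgebra.ι k (Sum.inl v'))) = mkQ k D S (ev k D v'.1) := by
  simp [Fmap, mk, RingQuot.liftAlgHom_mkAlgHom_apply, FreeAlgebra.lift_ι_apply]

lemma Fmap_ar (a' : (del D S).E) :
    Fmap (mk k (del D S) (FreeAlgebra.ι k (Sum.inr a'))) = mkQ k D S (ar k D a'.1) := by
  simp [Fmap, mk, RingQuot.liftAlgHom_mkAlgHom_apply, FreeAlgebra.lift_ι_apply]

/-- Generator images for the backward map. -/
noncomputable def gV (v : D.V) : L k (del D S) :=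
  if h : v ∈ S then 0 else ev k (del D S) ⟨v, h⟩

noncomputable def gE (a : D.E) : L k (del D S) :=
  if h : D.src a ∉ S ∧ D.tgt a ∉ S then ar k (del D S) ⟨a, h⟩ else 0

/-- The backward map on `L k D`. -/
noncomputable def Hmap : L k D →ₐ[k] L k (del D S) :=
  RingQuot.liftAlgHom k
    ⟨FreeAlgebra.lift k (Sum.elim (gV (S := S)) (gE (S := S))), by
      rintro x y (⟨v, w, hvw, rfl, rfl⟩ | ⟨v, rfl, rfl⟩ | ⟨rfl, rfl⟩ |
        ⟨a, rfl, rfl⟩ | ⟨a, rfl, rfl⟩ | ⟨a, v, hv, rfl, rfl⟩ | ⟨a, v, hv, rfl, rfl⟩ |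
        ⟨b, a, hba, rfl, rfl⟩) <;>
        simp only [map_mul, map_sum, map_one, map_zero, FreeAlgebra.lift_ι_apply,
          Sum.elim_inl, Sum.elim_inr]
      · -- v ≠ w
        by_cases h1 : v ∈ S
        · rw [gV, dif_pos h1, zero_mul]
        · by_cases h2 : w ∈ S
          · rw [gV, gV, dif_pos h2, mul_zero]
          · rw [gV, gV, dif_neg h1, dif_neg h2]
            exact ev_mul_ev_ne (fun hh => hvw (congrArg Subtype.val hh))
      · -- idempotent
        by_cases h1 : v ∈ S
        · rw [gV, dif_pos h1, zero_mul]
        · rw [gV, dif_neg h1]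
          exact ev_idem _
      · -- sum of vertices
        letI := D.fV
        have hsplit : (@Finset.univ D.V D.fV).sum (gV (k := k) (S := S))
            = ((Sᶜ : Finset D.V)).sum (gV (k := k) (S := S))
              + (S : Finset D.V).sum (gV (k := k) (S := S)) :=
          (Finset.sum_compl_add_sum S _).symm
        rw [hsplit]
        have hS0 : (S : Finset D.V).sum (gV (k := k) (S := S)) = 0 :=
          Finset.sum_eq_zero fun v hv => by rw [gV, dif_pos hv]
        have hSc : ((Sᶜ : Finset D.V)).sum (gV (k := k) (S := S))
            = (@Finset.univ (del D S).V (del D S).fV).sum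
                (fun v' => gV (k := k) (S := S) v'.1) :=
          Finset.sum_subtype (F := (del D S).fV) Sᶜ (fun x => Finset.mem_compl) _
        rw [hS0, add_zero, hSc]
        have hterm : ∀ v' ∈ (@Finset.univ (del D S).V (del D S).fV),
            gV (k := k) (S := S) v'.1 = ev k (del D S) v' := fun v' _ => by
          rw [gV, dif_neg v'.2]
          exact congrArg _ (Subtype.coe_eta v' v'.2)
        rw [Finset.sum_congr rfl hterm]
        exact sum_ev
      · -- e_{tgt a} * a = a
        by_cases hE : D.src a ∉ S ∧ D.tgt a ∉ S
        · rw [gE, dif_pos hE, gV, dif_neg hE.2]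
          exact tgt_ar (k := k) (D := del D S) ⟨a, hE⟩
        · rw [gE, dif_neg hE, mul_zero]
      · -- a * e_{src a} = a
        by_cases hE : D.src a ∉ S ∧ D.tgt a ∉ S
        · rw [gE, dif_pos hE, gV, dif_neg hE.1]
          exact ar_src (k := k) (D := del D S) ⟨a, hE⟩
        · rw [gE, dif_neg hE, zero_mul]
      · -- v ≠ tgt a
        by_cases hE : D.src a ∉ S ∧ D.tgt a ∉ S
        · by_cases hv' : v ∈ S
          · rw [gV, dif_pos hv', zero_mul]
          · rw [gV, dif_neg hv', gE, dif_pos hE]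
            exact ev_mul_ar (k := k) (D := del D S) (v := ⟨v, hv'⟩) (a := ⟨a, hE⟩)
              (fun hh => hv (congrArg Subtype.val hh))
        · rw [gE, dif_neg hE, mul_zero]
      · -- v ≠ src a
        by_cases hE : D.src a ∉ S ∧ D.tgt a ∉ S
        · by_cases hv' : v ∈ S
          · rw [gV, dif_pos hv', mul_zero]
          · rw [gV, dif_neg hv', gE, dif_pos hE]
            exact ar_mul_ev (k := k) (D := del D S) (v := ⟨v, hv'⟩) (a := ⟨a, hE⟩)
              (fun hh => hv (congrArg Subtype.val hh))
        · rw [gE, dif_neg hE, zero_mul]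
      · -- relations
        by_cases hEb : D.src b ∉ S ∧ D.tgt b ∉ S
        · by_cases hEa : D.src a ∉ S ∧ D.tgt a ∉ S
          · rw [gE, gE, dif_pos hEb, dif_pos hEa]
            exact rel_zero (k := k) (D := del D S) (b := ⟨b, hEb⟩) (a := ⟨a, hEa⟩) hba
          · rw [gE, gE, dif_neg hEa, mul_zero]
        · rw [gE, dif_neg hEb, zero_mul]⟩

lemma Hmap_ev (v : D.V) : Hmap (S := S) (ev k D v) = gV (k := k) (S := S) v := by
  simp [Hmap, ev, mk, RingQuot.liftAlgHom_mkAlgHom_apply, FreeAlgebra.lift_ι_apply]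

lemma Hmap_ar (a : D.E) : Hmap (S := S) (ar k D a) = gE (k := k) (S := S) a := by
  simp [Hmap, ar, mk, RingQuot.liftAlgHom_mkAlgHom_apply, FreeAlgebra.lift_ι_apply]

lemma Hmap_eS : Hmap (S := S) (eS S : L k D) = 0 := by
  rw [eS, map_sum]
  refine Finset.sum_eq_zero fun v hv => ?_
  rw [Hmap_ev, gV, dif_pos hv]

/-- The backward map. -/
noncomputable def Gmap : QS k D S →ₐ[k] L k (del D S) :=
  RingQuot.liftAlgHom k
    ⟨Hmap (S := S), by
      rintro x y ⟨h1, h2⟩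
      rw [h1, h2, Hmap_eS, map_zero]⟩

lemma Gmap_mkQ (z : L k D) : Gmap (mkQ k D S z) = Hmap (S := S) z := by
  simp [Gmap, mkQ, RingQuot.liftAlgHom_mkAlgHom_apply]

/-- The main combinatorial isomorphism. -/
noncomputable def delEquiv : L k (del D S) ≃ₐ[k] QS k D S := by
  refine AlgEquiv.ofAlgHom Fmap Gmap ?_ ?_
  · -- Fmap.comp Gmap = id on QS
    refine RingQuot.ringQuot_ext' k _ _ ?_
    refine algHom_ext _ _ fun x => ?_
    rcases x with v | a
    · show Fmap (Gmap (mkQ k D S (ev k D v))) = mkQ k D S (ev k D v)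
      rw [Gmap_mkQ, Hmap_ev, gV]
      split
      · rename_i h
        rw [map_zero, mkQ_ev_mem h]
      · rename_i h
        exact Fmap_ev ⟨v, h⟩
    · show Fmap (Gmap (mkQ k D S (ar k D a))) = mkQ k D S (ar k D a)
      rw [Gmap_mkQ, Hmap_ar, gE]
      split
      · rename_i h
        exact Fmap_ar ⟨a, h⟩
      · rename_i h
        rw [map_zero]
        rcases not_and_or.mp h with h' | h'
        · rw [mkQ_ar_src (not_not.mp h')]
        · rw [mkQ_ar_tgt (not_not.mp h')]
  · -- Gmap.comp Fmap = id on L k (del D S)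
    refine algHom_ext _ _ fun x => ?_
    rcases x with v' | a'
    · show Gmap (Fmap (ev k (del D S) v')) = ev k (del D S) v'
      rw [show Fmap (ev k (del D S) v') = mkQ k D S (ev k D v'.1) from Fmap_ev v',
        Gmap_mkQ, Hmap_ev, gV, dif_neg v'.2] <;> rfl
    · show Gmap (Fmap (ar k (del D S) a')) = ar k (del D S) a'
      rw [show Fmap (ar k (del D S) a') = mkQ k D S (ar k D a'.1) from Fmap_ar a',
        Gmap_mkQ, Hmap_ar, gE, dif_pos a'.2] <;> rfl

end GentleAux

end Aux6


section Aux7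

open STT

namespace GentleAux

variable {k : Type} [Field k] {D : STT.GentleQuiver}

lemma main_equiv [Module.Finite k (L k D)] (hC : D.Conds) (ε : L k D) (hε : ε * ε = ε) :
    ∃ D' : STT.GentleQuiver, D'.Conds ∧
      Nonempty ((RingQuot (fun a b : L k D => a = ε ∧ b = 0)) ≃ₐ[k]
        RingQuot (D'.rels k)) := by
  obtain ⟨S, ⟨φ1⟩⟩ := conj_quot_equiv ε hε
  exact ⟨del D S, del_conds hC S, ⟨φ1.trans (delEquiv (S := S)).symm⟩⟩

end GentleAux

end Aux7


open STT in
/-- **Lemma 2.1.** Let `A` be a finite-dimensional gentle algebra over an algebraically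
closed field `k` and `e` an idempotent of `A`.  Then the factor algebra `A/⟨e⟩` of `A`
by the two-sided ideal generated by `e` (realized as the `RingQuot` by the relation
`e = 0`) is again a gentle algebra. -/
theorem factor_of_gentle_by_idempotent_is_gentle
    (k : Type) [Field k] [IsAlgClosed k]
    (A : Type) [Ring A] [Algebra k A] [Module.Finite k A]
    (hA : IsGentleAlgebra k A)
    (e : A) (he : IsIdempotentElem e) :
    IsGentleAlgebra k (RingQuot (fun a b : A => a = e ∧ b = 0)) := by
  obtain ⟨hfinA, D, hconds, ⟨ψ⟩⟩ := hA
  haveI hLfin : Module.Finite k (GentleAux.L k D) := Module.Finite.equiv ψ.toLinearEquiv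
  have hε : ψ e * ψ e = ψ e := by rw [← map_mul, he]
  obtain ⟨D', hD', ⟨φ⟩⟩ := GentleAux.main_equiv hconds (ψ e) hε
  refine ⟨?_, D', hD', ⟨(GentleAux.quotMapEquiv ψ e).trans φ⟩⟩
  exact Module.Finite.of_surjective
    (RingQuot.mkAlgHom k (fun a b : A => a = e ∧ b = 0)).toLinearMap
    (fun x => RingQuot.mkAlgHom_surjective k _ x)
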